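/- Let R be the compact topological ring (ℤ/2ℤ)^ℕ with pointwise addition and multiplication and the product topology, let R̃ ⊆ R be the (dense) subring of finitely supported sequences, and let G = (R × R) ⋊ R be the generalized Heisenberg group defined via the continuous action π : R × (R × R) → R × R, π(f, (a, x)) = (a + f·x, x), with the product topology. Let B = {((0, x), 0) : x ∈ R̃} ≤ G and let P = Γ(B) ≤ Aut(G) be the group of inner automorphisms by elements of B. Then G is a compact two-step nilpotent topological group and the topological semidirect product G ⋊ P is NOT minimal. -/

import Mathlib

open scoped Topology
open scoped commutatorElement

/-- The group of self-homeomorphisms of `X`, with composition as multiplication: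
`(f * g) x = f (g x)`, identity `Homeomorph.refl` and inverse `Homeomorph.symm`. -/
instance homeoGroup (X : Type*) [TopologicalSpace X] : Group (X ≃ₜ X) where
  mul f g := g.trans f
  one := Homeomorph.refl X
  inv := Homeomorph.symm
  mul_assoc f g h := rfl
  one_mul f := rfl
  mul_one f := rfl
  inv_mul_cancel f := by ext x; exact f.symm_apply_apply x

/-- The compact-open topology on the homeomorphism group `H(X)`, induced from the
compact-open topology on `C(X, X)`. -/
def coTop (X : Type*) [TopologicalSpace X] : TopologicalSpace (X ≃ₜ X) :=
  TopologicalSpace.induced (fun f : X ≃ₜ X => (f : C(X, X))) ContinuousMap.compactOpen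

/-- The group `Aut(G)` of all topological group automorphisms of a topological group `G`
(group automorphisms that are homeomorphisms), as a subgroup of the homeomorphism
group of `G`. -/
def topAut (G : Type*) [Group G] [TopologicalSpace G] : Subgroup (G ≃ₜ G) where
  carrier := {f : G ≃ₜ G | ∀ a b : G, f (a * b) = f a * f b}
  one_mem' := fun _ _ => rfl
  mul_mem' := by
    intro f g hf hg a b
    show f (g (a * b)) = f (g a) * f (g b)
    rw [hg, hf]
  inv_mem' := by
    intro f hf a b
    show f.symm (a * b) = f.symm a * f.symm b
    apply f.injective
    rw [hf]
    simp

/-- The compact-open topology on `Aut(G)`. -/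
def autTop (G : Type*) [Group G] [TopologicalSpace G] : TopologicalSpace ↥(topAut G) :=
  TopologicalSpace.induced (Subtype.val : ↥(topAut G) → G ≃ₜ G) (coTop G)

/-- The tautological action of a subgroup `P ≤ Aut(G)` on `G`, as a homomorphism
`P →* MulAut G`. -/
def actHom {G : Type*} [Group G] [TopologicalSpace G] (P : Subgroup ↥(topAut G)) :
    ↥P →* MulAut G where
  toFun p := MulEquiv.mk' p.1.1.toEquiv (fun a b => p.1.2 a b)
  map_one' := rfl
  map_mul' _ _ := rfl

/-- The topology on a subgroup `P ≤ Aut(G)`, inherited from the compact-open topology. -/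
def subAutTop {G : Type*} [Group G] [TopologicalSpace G] (P : Subgroup ↥(topAut G)) :
    TopologicalSpace ↥P :=
  TopologicalSpace.induced (Subtype.val : ↥P → ↥(topAut G)) (autTop G)

/-- The product topology on the topological semidirect product `G ⋊ P`, whose underlying
group is `SemidirectProduct G ↥P (actHom P)`, i.e. the multiplication is
`(g₁, p₁) * (g₂, p₂) = (g₁ * p₁ g₂, p₁ * p₂)`. -/
def sdpTop {G : Type*} [Group G] [TopologicalSpace G] (P : Subgroup ↥(topAut G)) :
    TopologicalSpace (G ⋊[actHom P] ↥P) :=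
  TopologicalSpace.induced (fun x : G ⋊[actHom P] ↥P => (x.left, x.right))
    (@instTopologicalSpaceProd G ↥P _ (subAutTop P))

/-- A (Hausdorff) topological group `(G, τ)` is *minimal* if every Hausdorff group topology
on `G` coarser than `τ` equals `τ`. -/
def IsMinimalTopGroup (G : Type*) [Group G] (τ : TopologicalSpace G) : Prop :=
  ∀ σ : TopologicalSpace G, τ ≤ σ → @IsTopologicalGroup G σ _ → @T2Space G σ → σ = τ

/-- The canonical homomorphism `Γ : G → Aut(G)` sending `g` to the inner automorphism
`γ_g : x ↦ g * x * g⁻¹`; its range is the subgroup `Inn(G)` of inner automorphisms. -/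
def innerAutHom (G : Type*) [Group G] [TopologicalSpace G] [IsTopologicalGroup G] :
    G →* ↥(topAut G) where
  toFun g := ⟨(Homeomorph.mulLeft g).trans (Homeomorph.mulRight g⁻¹), by
    intro a b
    show g * (a * b) * g⁻¹ = (g * a * g⁻¹) * (g * b * g⁻¹)
    group⟩
  map_one' := by
    apply Subtype.ext
    ext x
    show (1 : G) * x * (1 : G)⁻¹ = x
    group
  map_mul' g h := by
    apply Subtype.ext
    ext x
    show (g * h) * x * (g * h)⁻¹ = g * (h * x * h⁻¹) * g⁻¹
    group

/-- The compact ring `R = (ℤ/2ℤ)^ℕ` with pointwise operations and the product topology. -/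
abbrev RH : Type := ℕ → ZMod 2

/-- The carrier of the generalized Heisenberg group `G = (R × R) ⋊ R`. -/
def Heis : Type := (RH × RH) × RH

/-- The multiplication of the generalized Heisenberg group, corresponding to the action
`π(f, (a, x)) = (a + f·x, x)`:
`((a₁, x₁), f₁) · ((a₂, x₂), f₂) = ((a₁ + a₂ + f₁·x₂, x₁ + x₂), f₁ + f₂)`. -/
def heisMul (p q : Heis) : Heis :=
  ((p.1.1 + q.1.1 + p.2 * q.1.2, p.1.2 + q.1.2), p.2 + q.2)

def heisInv (p : Heis) : Heis :=
  ((-p.1.1 + p.2 * p.1.2, -p.1.2), -p.2)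

instance : Group Heis where
  mul := heisMul
  one := ((0, 0), 0)
  inv := heisInv
  mul_assoc p q r := by
    show heisMul (heisMul p q) r = heisMul p (heisMul q r)
    simp only [heisMul]
    exact Prod.ext (Prod.ext (by ring) (by ring)) (by ring)
  one_mul p := by
    show heisMul ((0, 0), 0) p = p
    simp only [heisMul]
    exact Prod.ext (Prod.ext (by ring) (by ring)) (by ring)
  mul_one p := by
    show heisMul p ((0, 0), 0) = p
    simp only [heisMul]
    exact Prod.ext (Prod.ext (by ring) (by ring)) (by ring)
  inv_mul_cancel p := by
    show heisMul (heisInv p) p = ((0, 0), 0)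
    simp only [heisMul, heisInv]
    exact Prod.ext (Prod.ext (by ring) (by ring)) (by ring)

instance : TopologicalSpace Heis := inferInstanceAs (TopologicalSpace ((RH × RH) × RH))
instance : CompactSpace Heis := inferInstanceAs (CompactSpace ((RH × RH) × RH))
instance : T2Space Heis := inferInstanceAs (T2Space ((RH × RH) × RH))

instance : IsTopologicalGroup Heis where
  continuous_mul := by
    show Continuous fun p : Heis × Heis => heisMul p.1 p.2
    unfold heisMul
    fun_prop
  continuous_inv := by
    show Continuous fun p : Heis => heisInv p
    unfold heisInv
    fun_prop

/-- The subgroup `B = {((0, x), 0) : x ∈ R̃} ≤ G`, where `R̃ ⊆ R` is the subring of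
finitely supported sequences. -/
def heisB : Subgroup Heis where
  carrier := {p : Heis | p.1.1 = 0 ∧ (Function.support p.1.2).Finite ∧ p.2 = 0}
  one_mem' := by
    refine ⟨rfl, ?_, rfl⟩
    show (Function.support (0 : RH)).Finite
    simp
  mul_mem' := by
    rintro p q ⟨ha1, ha2, ha3⟩ ⟨hb1, hb2, hb3⟩
    refine ⟨?_, ?_, ?_⟩
    · show p.1.1 + q.1.1 + p.2 * q.1.2 = 0
      rw [ha1, hb1, ha3]; ring
    · show (Function.support (p.1.2 + q.1.2)).Finite
      exact (ha2.union hb2).subset (Function.support_add _ _)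
    · show p.2 + q.2 = 0
      rw [ha3, hb3]; ring
  inv_mem' := by
    rintro p ⟨ha1, ha2, ha3⟩
    refine ⟨?_, ?_, ?_⟩
    · show -p.1.1 + p.2 * p.1.2 = 0
      rw [ha1, ha3]; ring
    · show (Function.support (-p.1.2)).Finite
      rwa [Function.support_neg]
    · show -p.2 = 0
      rw [ha3]; ring

/-- `P = Γ(B) ≤ Aut(G)`: the group of inner automorphisms of the generalized Heisenberg
group `G` by elements of `B`. -/
def heisP : Subgroup ↥(topAut Heis) := Subgroup.map (innerAutHom Heis) heisB

/-! ### Auxiliary development for the non-minimality proof -/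

lemma negRH (x : RH) : -x = x :=
  funext fun i => (by decide : ∀ v : ZMod 2, -v = v) (x i)

/-- The all-ones sequence. -/
def uAll : RH := fun _ => 1

/-- The two-element subgroup `{0, u}` generated by the all-ones sequence. -/
def Nu : AddSubgroup RH where
  carrier := {0, uAll}
  zero_mem' := Or.inl rfl
  add_mem' := by
    rintro a b (rfl | rfl) (rfl | rfl)
    · exact Or.inl (by ring)
    · exact Or.inr (by rw [zero_add]; exact rfl)
    · exact Or.inr (by rw [add_zero]; exact rfl)
    · exact Or.inl (funext fun i => (by decide : ∀ v : ZMod 2, v + v = 0) (uAll i))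
  neg_mem' := by
    rintro a (rfl | rfl)
    · exact Or.inl (by ring)
    · exact Or.inr (negRH uAll)

lemma mem_Nu {c : RH} : c ∈ Nu ↔ c = 0 ∨ c = uAll := Iff.rfl

lemma Nu_isClosed : IsClosed (Nu : Set RH) := by
  have : (Nu : Set RH) = {0, uAll} := rfl
  rw [this]
  exact (Set.finite_singleton uAll).insert 0 |>.isClosed

/-- The base point used to read off the conjugating element from an inner automorphism. -/
def ePt : Heis := (((0 : RH), (0 : RH)), (1 : RH))

/-- Read off (the middle coordinate of) the conjugating element of an automorphism. -/
def xOf (p : ↥heisP) : RH := (p.val.val ePt).1.1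

/-- The conjugating element of an inner automorphism in `P`. -/
def bOf (p : ↥heisP) : Heis := (((0 : RH), xOf p), (0 : RH))

lemma inner_apply (b : Heis) (hb1 : b.1.1 = 0) (hb3 : b.2 = 0) (g : Heis) :
    (innerAutHom Heis b).val g = ((g.1.1 + g.2 * b.1.2, g.1.2), g.2) := by
  show b * g * b⁻¹ = _
  show heisMul (heisMul b g) (heisInv b) = _
  simp only [heisMul, heisInv, hb1, hb3]
  refine Prod.ext (Prod.ext ?_ ?_) ?_
  · show (0:RH) + g.1.1 + (0:RH) * g.1.2 + (-(0:RH) + (0:RH) * b.1.2)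
      + ((0:RH) + g.2) * -b.1.2 = g.1.1 + g.2 * b.1.2
    conv_rhs => rw [← negRH (g.2 * b.1.2)]
    ring
  · show b.1.2 + g.1.2 + -b.1.2 = g.1.2
    ring
  · show (0:RH) + g.2 + -(0:RH) = g.2
    ring

lemma xOf_eq_of (p : ↥heisP) (b : Heis) (hb : b ∈ heisB)
    (h : innerAutHom Heis b = p.val) : xOf p = b.1.2 := by
  unfold xOf
  rw [← h, inner_apply b hb.1 hb.2.2]
  show (0 : RH) + 1 * b.1.2 = b.1.2
  ring

lemma bOf_spec (p : ↥heisP) : bOf p ∈ heisB ∧ innerAutHom Heis (bOf p) = p.val := by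
  obtain ⟨b, hb, hval⟩ := Subgroup.mem_map.1 p.2
  have hx : xOf p = b.1.2 := xOf_eq_of p b hb hval
  have hbof : bOf p = b := by
    unfold bOf
    rw [hx]
    exact Prod.ext (Prod.ext hb.1.symm rfl) hb.2.2.symm
  rw [hbof]
  exact ⟨hb, hval⟩

lemma xOf_mul (p q : ↥heisP) : xOf (p * q) = xOf p + xOf q := by
  have hp := bOf_spec p
  have hq := bOf_spec q
  have h : innerAutHom Heis (bOf p * bOf q) = (p * q).val := by
    rw [map_mul, hp.2, hq.2]; rfl
  have := xOf_eq_of (p * q) (bOf p * bOf q) (mul_mem hp.1 hq.1) h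
  rw [this]
  show xOf p + xOf q = _
  rfl

lemma bOf_mul (p q : ↥heisP) : bOf (p * q) = bOf p * bOf q := by
  unfold bOf
  rw [xOf_mul]
  refine Prod.ext (Prod.ext ?_ rfl) ?_
  · show (0 : RH) = 0 + 0 + 0 * xOf q
    ring
  · show (0 : RH) = 0 + 0
    ring

/-- The carrier of the topological semidirect product `G ⋊ P`. -/
abbrev Hsd : Type := Heis ⋊[actHom heisP] ↥heisP

/-- First component of the comparison map: `(g, p) ↦ g ⬝ b(p)`. -/
def Phi1 (h : Hsd) : Heis := h.left * bOf h.right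

/-- Second component of the comparison map: `(g, p) ↦ x(p) + Nu`. -/
def Phi2 (h : Hsd) : RH ⧸ Nu := QuotientAddGroup.mk (xOf h.right)

/-- The comparison map `G ⋊ P → G × (R/⟨u⟩)`. -/
def Psi (h : Hsd) : Heis × (RH ⧸ Nu) := (Phi1 h, Phi2 h)

lemma Phi1_mul (h1 h2 : Hsd) : Phi1 (h1 * h2) = Phi1 h1 * Phi1 h2 := by
  unfold Phi1
  rw [SemidirectProduct.mul_left, SemidirectProduct.mul_right, bOf_mul]
  have hb1 := bOf_spec h1.right
  have hact : (actHom heisP h1.right) h2.left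
      = bOf h1.right * h2.left * (bOf h1.right)⁻¹ := by
    show h1.right.val.val h2.left = _
    rw [← hb1.2]
    rfl
  rw [hact]
  group

lemma Phi1_one : Phi1 (1 : Hsd) = 1 := by
  have h1 : xOf (1 : ↥heisP) = 0 := by
    have := xOf_eq_of (1 : ↥heisP) (1 : Heis) (one_mem _) (by rw [map_one]; rfl)
    rw [this]; rfl
  unfold Phi1 bOf
  rw [SemidirectProduct.one_left, SemidirectProduct.one_right, h1]
  exact one_mul (1 : Heis)

lemma Phi1_inv (h : Hsd) : Phi1 h⁻¹ = (Phi1 h)⁻¹ := by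
  have : Phi1 h⁻¹ * Phi1 h = 1 := by rw [← Phi1_mul, inv_mul_cancel, Phi1_one]
  exact eq_inv_of_mul_eq_one_left this

lemma Phi2_mul (h1 h2 : Hsd) : Phi2 (h1 * h2) = Phi2 h1 + Phi2 h2 := by
  unfold Phi2
  rw [SemidirectProduct.mul_right, xOf_mul]
  rfl

lemma Phi2_one : Phi2 (1 : Hsd) = 0 := by
  unfold Phi2
  have h1 : xOf (1 : ↥heisP) = 0 := by
    have := xOf_eq_of (1 : ↥heisP) (1 : Heis) (one_mem _) (by rw [map_one]; rfl)
    rw [this]; rfl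
  rw [SemidirectProduct.one_right, h1]
  rfl

lemma Phi2_inv (h : Hsd) : Phi2 h⁻¹ = -Phi2 h := by
  have : Phi2 h⁻¹ + Phi2 h = 0 := by rw [← Phi2_mul, inv_mul_cancel, Phi2_one]
  exact neg_eq_of_add_eq_zero_left this |>.symm

lemma uAll_support_infinite : ¬ (Function.support uAll).Finite := by
  intro hf
  have huniv : (Set.univ : Set ℕ) ⊆ Function.support uAll := by
    intro i _
    show uAll i ≠ 0
    exact one_ne_zero
  exact Set.infinite_univ (hf.subset huniv)

lemma xOf_finite (p : ↥heisP) : (Function.support (xOf p)).Finite :=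
  (bOf_spec p).1.2.1

lemma Psi_inj : Function.Injective Psi := by
  intro a1 a2 heq
  have e1 : Phi1 a1 = Phi1 a2 := congrArg Prod.fst heq
  have e2 : Phi2 a1 = Phi2 a2 := congrArg Prod.snd heq
  have hx : xOf a1.right = xOf a2.right := by
    have hmem := (QuotientAddGroup.eq).1 e2
    rcases mem_Nu.1 hmem with h0 | hu
    · have h' : xOf a1.right + (-xOf a1.right + xOf a2.right) = xOf a1.right + 0 := by
        rw [h0]
      simpa using h'.symm
    · exfalso
      have hfin : (Function.support (-xOf a1.right + xOf a2.right)).Finite := by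
        apply ((xOf_finite a1.right).union (xOf_finite a2.right)).subset
        intro n hn
        by_contra hc
        simp only [Set.mem_union, Function.mem_support, not_or, not_not] at hc
        apply hn
        show (-xOf a1.right + xOf a2.right) n = 0
        simp only [Pi.add_apply, Pi.neg_apply, hc.1, hc.2]
        ring
      rw [hu] at hfin
      exact uAll_support_infinite hfin
  have hright : a1.right = a2.right := by
    have hb1 := bOf_spec a1.right
    have hb2 := bOf_spec a2.right
    have hbo : bOf a1.right = bOf a2.right := by unfold bOf; rw [hx]
    apply Subtype.ext
    rw [← hb1.2, ← hb2.2, hbo]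
  have hleft : a1.left = a2.left := by
    have h' : a1.left * bOf a1.right = a2.left * bOf a2.right := e1
    rw [hright] at h'
    exact mul_right_cancel h'
  exact SemidirectProduct.ext hleft hright

/-- The coarser topology: induced by `Psi` from `G × R/⟨u⟩`. -/
def sigmaTop : TopologicalSpace Hsd := TopologicalSpace.induced Psi inferInstance

lemma cont_xOf : @Continuous ↥heisP RH (subAutTop heisP) _ xOf := by
  letI := subAutTop heisP
  have h1 : Continuous (fun p : ↥heisP => ((p.val.val : Heis ≃ₜ Heis) : C(Heis, Heis))) := by
    rw [continuous_iff_le_induced]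
    show subAutTop heisP ≤ _
    unfold subAutTop autTop coTop
    rw [induced_compose, induced_compose]
    exact le_of_eq rfl
  have h2 : Continuous (fun p : ↥heisP => ((p.val.val : Heis ≃ₜ Heis) : C(Heis, Heis)) ePt) :=
    (continuous_eval_const ePt).comp h1
  exact (continuous_fst.comp continuous_fst).comp h2

lemma cont_right : @Continuous Hsd ↥heisP (sdpTop heisP) (subAutTop heisP)
    (fun h => h.right) := by
  letI := sdpTop heisP
  letI := subAutTop heisP
  have h1 : Continuous (fun h : Hsd => (h.left, h.right)) := continuous_induced_dom
  exact continuous_snd.comp h1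

lemma cont_left : @Continuous Hsd Heis (sdpTop heisP) _ (fun h => h.left) := by
  letI := sdpTop heisP
  letI := subAutTop heisP
  have h1 : Continuous (fun h : Hsd => (h.left, h.right)) := continuous_induced_dom
  exact continuous_fst.comp h1

lemma cont_bOf : @Continuous ↥heisP Heis (subAutTop heisP) _ bOf := by
  letI := subAutTop heisP
  exact ((continuous_const.prodMk cont_xOf).prodMk continuous_const)

lemma cont_Psi : @Continuous Hsd (Heis × (RH ⧸ Nu)) (sdpTop heisP) _ Psi := by
  letI := sdpTop heisP
  letI := subAutTop heisP
  have hP1 : Continuous Phi1 := cont_left.mul (cont_bOf.comp cont_right)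
  have hP2 : Continuous Phi2 :=
    QuotientAddGroup.continuous_mk.comp (cont_xOf.comp cont_right)
  exact hP1.prodMk hP2

lemma sdp_le_sigma : sdpTop heisP ≤ sigmaTop := by
  unfold sigmaTop
  exact continuous_iff_le_induced.1 cont_Psi

lemma sigma_cont_Phi1 : @Continuous Hsd Heis sigmaTop _ Phi1 := by
  letI := sigmaTop
  have h : Continuous Psi := continuous_induced_dom
  exact continuous_fst.comp h

lemma sigma_cont_Phi2 : @Continuous Hsd (RH ⧸ Nu) sigmaTop _ Phi2 := by
  letI := sigmaTop
  have h : Continuous Psi := continuous_induced_dom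
  exact continuous_snd.comp h

lemma sigma_topGroup : @IsTopologicalGroup Hsd sigmaTop _ := by
  letI := sigmaTop
  refine { continuous_mul := ?_, continuous_inv := ?_ }
  · refine continuous_induced_rng.2 ?_
    have : (Psi ∘ fun p : Hsd × Hsd => p.1 * p.2)
        = fun p : Hsd × Hsd => (Phi1 p.1 * Phi1 p.2, Phi2 p.1 + Phi2 p.2) := by
      funext p
      show Psi (p.1 * p.2) = _
      unfold Psi
      rw [Phi1_mul, Phi2_mul]
    rw [this]
    exact ((sigma_cont_Phi1.comp continuous_fst).mul
        (sigma_cont_Phi1.comp continuous_snd)).prodMk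
      ((sigma_cont_Phi2.comp continuous_fst).add (sigma_cont_Phi2.comp continuous_snd))
  · refine continuous_induced_rng.2 ?_
    have : (Psi ∘ fun h : Hsd => h⁻¹) = fun h : Hsd => ((Phi1 h)⁻¹, -Phi2 h) := by
      funext h
      show Psi h⁻¹ = _
      unfold Psi
      rw [Phi1_inv, Phi2_inv]
    rw [this]
    exact sigma_cont_Phi1.inv.prodMk sigma_cont_Phi2.neg

lemma sigma_t2 : @T2Space Hsd sigmaTop := by
  letI := sigmaTop
  haveI : IsClosed (Nu : Set RH) := Nu_isClosed
  haveI : T2Space (RH ⧸ Nu) := inferInstance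
  have hemb : Topology.IsEmbedding Psi := ⟨⟨rfl⟩, Psi_inj⟩
  exact hemb.t2Space

/-- The witness open set: `{(g, p) : x(p)(0) = 0}`. -/
def Wset : Set Hsd := (fun h : Hsd => xOf h.right 0) ⁻¹' {0}

lemma Wset_open_sdp : IsOpen[sdpTop heisP] Wset := by
  letI := sdpTop heisP
  letI := subAutTop heisP
  have hc : Continuous (fun h : Hsd => xOf h.right 0) :=
    (continuous_apply 0).comp (cont_xOf.comp cont_right)
  exact (isOpen_discrete _).preimage hc

lemma Wset_not_open_sigma : ¬ IsOpen[sigmaTop] Wset := by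
  intro hop
  obtain ⟨O, hO, hpre⟩ := (@isOpen_induced_iff Hsd _ _ Wset Psi).1 hop
  -- `1 ∈ Wset`
  have hx1 : xOf (1 : ↥heisP) = 0 := by
    have := xOf_eq_of (1 : ↥heisP) (1 : Heis) (one_mem _) (by rw [map_one]; rfl)
    rw [this]; rfl
  have h1W : (1 : Hsd) ∈ Wset := by
    show xOf (1 : Hsd).right 0 ∈ ({0} : Set (ZMod 2))
    rw [SemidirectProduct.one_right, hx1]
    rfl
  have h1O : Psi (1 : Hsd) ∈ O := by
    rw [← hpre] at h1W
    exact h1W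
  obtain ⟨U, V, hU, hV, hU1, hV1, hUV⟩ := (isOpen_prod_iff).1 hO _ _ h1O
  -- `V` pulls back to an open neighbourhood of `0` in `RH`
  have hVpre : IsOpen ((QuotientAddGroup.mk : RH → RH ⧸ Nu) ⁻¹' V) :=
    hV.preimage QuotientAddGroup.continuous_mk
  have h0V : (0 : RH) ∈ (QuotientAddGroup.mk : RH → RH ⧸ Nu) ⁻¹' V := by
    show QuotientAddGroup.mk (0 : RH) ∈ V
    have : Phi2 (1 : Hsd) = QuotientAddGroup.mk (0 : RH) := by
      unfold Phi2
      rw [SemidirectProduct.one_right, hx1]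
    rw [← this]
    exact hV1
  obtain ⟨I, us, hus, hsub⟩ := isOpen_pi_iff.1 hVpre 0 h0V
  set m : ℕ := I.sup id + 1 with hm
  set xb : RH := fun n => if n < m then 1 else 0 with hxb
  have hxbfin : (Function.support xb).Finite := by
    apply (Set.finite_Iio m).subset
    intro n hn
    simp only [Function.mem_support, hxb] at hn
    by_contra hlt
    simp only [Set.mem_Iio] at hlt
    exact hn (if_neg hlt)
  set y : RH := fun n => if n < m then 0 else 1 with hy
  have hyV : y ∈ (QuotientAddGroup.mk : RH → RH ⧸ Nu) ⁻¹' V := by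
    apply hsub
    intro i hi
    have him : i < m := Nat.lt_succ_of_le (Finset.le_sup (f := id) hi)
    have : y i = (0 : RH) i := by
      simp only [hy, if_pos him]
      rfl
    rw [this]
    exact (hus i hi).2
  have hmkeq : (QuotientAddGroup.mk xb : RH ⧸ Nu) = QuotientAddGroup.mk y := by
    rw [QuotientAddGroup.eq]
    apply mem_Nu.2
    right
    funext n
    show -xb n + y n = uAll n
    by_cases hn : n < m
    · simp only [hxb, hy, if_pos hn]
      show -(1 : ZMod 2) + 0 = 1
      decide
    · simp only [hxb, hy, if_neg hn]
      show -(0 : ZMod 2) + 1 = 1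
      decide
  -- the witness element of `G ⋊ P`
  set b0 : Heis := (((0 : RH), xb), (0 : RH)) with hb0def
  have hb0 : b0 ∈ heisB := ⟨rfl, hxbfin, rfl⟩
  set p0 : ↥heisP := ⟨innerAutHom Heis b0, Subgroup.mem_map.2 ⟨b0, hb0, rfl⟩⟩ with hp0
  have hx0 : xOf p0 = xb := xOf_eq_of p0 b0 hb0 rfl
  have hbOf0 : bOf p0 = b0 := by
    unfold bOf
    rw [hx0]
  set h0 : Hsd := ⟨b0⁻¹, p0⟩ with hh0
  have hPsi : Psi h0 ∈ U ×ˢ V := by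
    constructor
    · show Phi1 h0 ∈ U
      have : Phi1 h0 = 1 := by
        unfold Phi1
        show b0⁻¹ * bOf p0 = 1
        rw [hbOf0, inv_mul_cancel]
      rw [this]
      have h1 : Phi1 (1 : Hsd) = 1 := Phi1_one
      rw [← h1]
      exact hU1
    · show Phi2 h0 ∈ V
      have : Phi2 h0 = QuotientAddGroup.mk y := by
        unfold Phi2
        show (QuotientAddGroup.mk (xOf p0) : RH ⧸ Nu) = _
        rw [hx0, hmkeq]
      rw [this]
      exact hyV
  have hh0W : h0 ∈ Wset := by
    rw [← hpre]
    exact hUV hPsi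
  have hc : xOf h0.right 0 = 0 := hh0W
  have hrt : h0.right = p0 := rfl
  rw [hrt, hx0] at hc
  simp only [hxb] at hc
  rw [if_pos (show (0 : ℕ) < m by rw [hm]; omega)] at hc
  exact one_ne_zero hc

lemma sigma_ne : sigmaTop ≠ sdpTop heisP := by
  intro he
  exact Wset_not_open_sigma (he ▸ Wset_open_sdp)

/-- The generalized Heisenberg group `G = (R × R) ⋊ R` over
`R = (ℤ/2ℤ)^ℕ` is a compact two-step nilpotent topological group such that, with
`P = Γ(B)` for `B = {((0, x), 0) : x ∈ R̃}`, the topological semidirect product `G ⋊ P` is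
NOT minimal. -/
theorem heisenberg_semidirectProduct_not_minimal :
    CompactSpace Heis ∧ IsTopologicalGroup Heis ∧
    (∀ a b : Heis, ⁅a, b⁆ ∈ Subgroup.center Heis) ∧
    ¬ IsMinimalTopGroup (Heis ⋊[actHom heisP] ↥heisP) (sdpTop heisP) := by
  refine ⟨inferInstance, inferInstance, ?_, ?_⟩
  · intro a b
    rw [Subgroup.mem_center_iff]
    intro g
    have h2 : (⁅a, b⁆ : Heis).1.2 = 0 := by
      show (heisMul (heisMul (heisMul a b) (heisInv a)) (heisInv b)).1.2 = 0
      simp only [heisMul, heisInv]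
      ring
    have h3 : (⁅a, b⁆ : Heis).2 = 0 := by
      show (heisMul (heisMul (heisMul a b) (heisInv a)) (heisInv b)).2 = 0
      simp only [heisMul, heisInv]
      ring
    show heisMul g ⁅a, b⁆ = heisMul ⁅a, b⁆ g
    simp only [heisMul]
    refine Prod.ext (Prod.ext ?_ ?_) ?_
    · show g.1.1 + (⁅a, b⁆ : Heis).1.1 + g.2 * (⁅a, b⁆ : Heis).1.2
        = (⁅a, b⁆ : Heis).1.1 + g.1.1 + (⁅a, b⁆ : Heis).2 * g.1.2
      rw [h2, h3]; ring
    · show g.1.2 + (⁅a, b⁆ : Heis).1.2 = (⁅a, b⁆ : Heis).1.2 + g.1.2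
      ring
    · show g.2 + (⁅a, b⁆ : Heis).2 = (⁅a, b⁆ : Heis).2 + g.2
      ring
  · intro hmin
    exact sigma_ne (hmin sigmaTop sdp_le_sigma sigma_topGroup sigma_t2)
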